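/- (Bolker–Roth) Let d+1 ≤ a, b with a + b ≤ (d+2 choose 2), and let p be a generic configuration of the complete bipartite graph K_{a,b} in ℝ^d. Then the real vector space Ω(K_{a,b}, p) of equilibrium stresses of the framework (K_{a,b}, p) has dimension (a − d − 1)(b − d − 1). -/

import Mathlib

open scoped Classical

noncomputable section

/-- Two configurations are equivalent if corresponding edge lengths agree. -/
def Equivalent {d : ℕ} {V : Type*} (G : SimpleGraph V)
    (p q : V → EuclideanSpace ℝ (Fin d)) : Prop :=
  ∀ u v, G.Adj u v → ‖p u - p v‖ = ‖q u - q v‖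

/-- Two configurations are congruent if all pairwise distances agree. -/
def FrameworkCongruent {d : ℕ} {V : Type*} (p q : V → EuclideanSpace ℝ (Fin d)) : Prop :=
  ∀ u v, ‖p u - p v‖ = ‖q u - q v‖

/-- A configuration is generic if the coordinates of its points are
algebraically independent over `ℚ`. -/
def Generic {d : ℕ} {V : Type*} (p : V → EuclideanSpace ℝ (Fin d)) : Prop :=
  AlgebraicIndependent ℚ (fun x : V × Fin d => p x.1 x.2)

/-- A framework `(G, p)` is locally rigid if all equivalent configurations
sufficiently close to `p` are congruent to `p`. -/
def LocallyRigid {d : ℕ} {V : Type*} (G : SimpleGraph V)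
    (p : V → EuclideanSpace ℝ (Fin d)) : Prop :=
  ∃ ε > 0, ∀ q, Equivalent G p q → (∀ v, ‖q v - p v‖ < ε) → FrameworkCongruent p q

/-- Generic local rigidity in `ℝ^d`. -/
def GLR (d : ℕ) {V : Type*} (G : SimpleGraph V) : Prop :=
  ∀ p : V → EuclideanSpace ℝ (Fin d), Generic p → LocallyRigid G p

/-- Generic global rigidity in `ℝ^d`. -/
def GGR (d : ℕ) {V : Type*} (G : SimpleGraph V) : Prop :=
  ∀ p : V → EuclideanSpace ℝ (Fin d), Generic p →
    ∀ q, Equivalent G p q → FrameworkCongruent p q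

/-- Generic redundant rigidity in `ℝ^d`: deleting any edge leaves a GLR graph. -/
def GRR (d : ℕ) {V : Type*} (G : SimpleGraph V) : Prop :=
  ∀ e ∈ G.edgeSet, GLR d (G.deleteEdges {e})

/-- `G` is `k`-connected: at least `k+1` vertices, and removing any at most
`k-1` vertices leaves a connected induced subgraph. -/
def KConnected (k : ℕ) {V : Type*} [Fintype V] (G : SimpleGraph V) : Prop :=
  k + 1 ≤ Fintype.card V ∧
    ∀ S : Finset V, S.card ≤ k - 1 → (G.induce ((↑S : Set V)ᶜ)).Connected

/-- The join `G + H` of two graphs: all edges of `G`, all edges of `H`, and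
all cross edges. -/
def graphJoin {α β : Type*} (G : SimpleGraph α) (H : SimpleGraph β) :
    SimpleGraph (α ⊕ β) :=
  SimpleGraph.fromRel (fun x y =>
    (∃ a b, x = Sum.inl a ∧ y = Sum.inl b ∧ G.Adj a b) ∨
    (∃ a b, x = Sum.inr a ∧ y = Sum.inr b ∧ H.Adj a b) ∨
    (x.isLeft ∧ y.isRight))

/-- The disjoint union `G ∪ H` of two graphs. -/
def disjUnion {α β : Type*} (G : SimpleGraph α) (H : SimpleGraph β) :
    SimpleGraph (α ⊕ β) :=
  SimpleGraph.fromRel (fun x y =>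
    (∃ a b, x = Sum.inl a ∧ y = Sum.inl b ∧ G.Adj a b) ∨
    (∃ a b, x = Sum.inr a ∧ y = Sum.inr b ∧ H.Adj a b))

/-- Apply a `d × d` matrix to a point of `ℝ^d`. -/
def matApply {d : ℕ} (A : Matrix (Fin d) (Fin d) ℝ)
    (x : EuclideanSpace ℝ (Fin d)) : EuclideanSpace ℝ (Fin d) :=
  WithLp.toLp 2 (fun i => ∑ j, A i j * x j)

/-- An infinitesimal motion of a framework. -/
def IsInfinitesimalMotion {d : ℕ} {V : Type*} (G : SimpleGraph V)
    (p p' : V → EuclideanSpace ℝ (Fin d)) : Prop :=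
  ∀ u v, G.Adj u v → inner ℝ (p u - p v) (p' u - p' v) = (0 : ℝ)

/-- A trivial motion: `p' v = S (p v) + b` for a skew-symmetric matrix `S`. -/
def IsTrivialMotion {d : ℕ} {V : Type*}
    (p p' : V → EuclideanSpace ℝ (Fin d)) : Prop :=
  ∃ (S : Matrix (Fin d) (Fin d) ℝ) (b : EuclideanSpace ℝ (Fin d)),
    S.transpose = -S ∧ ∀ v, p' v = matApply S (p v) + b

/-- A framework is infinitesimally rigid if every infinitesimal motion is trivial. -/
def InfinitesimallyRigid {d : ℕ} {V : Type*} (G : SimpleGraph V)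
    (p : V → EuclideanSpace ℝ (Fin d)) : Prop :=
  ∀ p', IsInfinitesimalMotion G p p' → IsTrivialMotion p p'

/-- An equilibrium stress: a real number on each edge (zero off edges) with the
equilibrium condition at each vertex. -/
def IsEquilibriumStress {d : ℕ} {V : Type*} [Fintype V] (G : SimpleGraph V)
    (p : V → EuclideanSpace ℝ (Fin d)) (ω : Sym2 V → ℝ) : Prop :=
  (∀ e, e ∉ G.edgeSet → ω e = 0) ∧
  ∀ v, ∑ u ∈ G.neighborFinset v, ω s(u, v) • (p v - p u) = 0

/-- The point `x` lies on the quadric `(A, c, D)`: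
`xᵀ A x + 2⟨c, x⟩ + D = 0`. -/
def OnQuadric {d : ℕ} (A : Matrix (Fin d) (Fin d) ℝ) (c : EuclideanSpace ℝ (Fin d))
    (D : ℝ) (x : EuclideanSpace ℝ (Fin d)) : Prop :=
  (∑ i, ∑ j, x i * A i j * x j) + 2 * (∑ i, c i * x i) + D = 0

/-- The polarized quadric constraint for a pair of points:
`xᵀ A y + ⟨c, x + y⟩ + D = 0`. -/
def PolarConstraint {d : ℕ} (A : Matrix (Fin d) (Fin d) ℝ)
    (c : EuclideanSpace ℝ (Fin d)) (D : ℝ) (x y : EuclideanSpace ℝ (Fin d)) : Prop :=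
  (∑ i, ∑ j, x i * A i j * y j) + (∑ i, c i * (x i + y i)) + D = 0

/-- The vector space of equilibrium stresses of the framework `(G, p)`. -/
def stressSpace (d : ℕ) {V : Type*} [Fintype V] (G : SimpleGraph V)
    (p : V → EuclideanSpace ℝ (Fin d)) : Submodule ℝ (Sym2 V → ℝ) where
  carrier := {ω | IsEquilibriumStress G p ω}
  zero_mem' := by
    refine ⟨fun e _ => rfl, fun v => ?_⟩
    simp
  add_mem' := by
    rintro ω₁ ω₂ ⟨h1, h1'⟩ ⟨h2, h2'⟩
    refine ⟨fun e he => by simp [h1 e he, h2 e he], fun v => ?_⟩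
    simp only [Pi.add_apply, add_smul, Finset.sum_add_distrib, h1' v, h2' v, add_zero]
  smul_mem' := by
    rintro r ω ⟨h1, h2⟩
    refine ⟨fun e he => by simp [h1 e he], fun v => ?_⟩
    simp only [Pi.smul_apply, smul_eq_mul, mul_smul, ← Finset.smul_sum, h2 v, smul_zero]



set_option maxHeartbeats 1000000
set_option synthInstance.maxHeartbeats 400000
set_option linter.unusedSectionVars false
set_option linter.unusedVariables false
set_option linter.unreachableTactic false
set_option linter.unusedTactic false

section Gram
variable {K : Type*} [Field K] [LinearOrder K] [IsStrictOrderedRing K] {ι n : Type*} [Fintype ι] [DecidableEq ι] [Fintype n]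

def gramMat (v : ι → n → K) : Matrix ι ι K := Matrix.of fun k l => ∑ t, v k t * v l t

lemma gram_mulVec (v : ι → n → K) (c : ι → K) (k : ι) :
    (gramMat v).mulVec c k = ∑ t, v k t * (∑ l, c l * v l t) := by
  show ∑ l, (∑ t, v k t * v l t) * c l = _
  simp_rw [Finset.sum_mul, Finset.mul_sum]
  rw [Finset.sum_comm]
  apply Finset.sum_congr rfl
  intro t _
  apply Finset.sum_congr rfl
  intro l _
  ring

lemma li_of_gram_det_ne_zero {v : ι → n → K} (h : (gramMat v).det ≠ 0) :
    LinearIndependent K v := by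
  rw [Fintype.linearIndependent_iff]
  intro c hc
  have h0 : ∀ t, ∑ l, c l * v l t = 0 := by
    intro t
    have := congrFun hc t
    simpa [Finset.sum_apply] using this
  have hmv : (gramMat v).mulVec c = 0 := by
    funext k
    rw [gram_mulVec]
    simp [h0]
  have : c = 0 := by
    by_contra hc0
    exact h (Matrix.exists_mulVec_eq_zero_iff.mp ⟨c, hc0, hmv⟩)
  intro i; rw [this]; rfl

lemma gram_det_ne_zero_of_li {v : ι → n → K} (h : LinearIndependent K v) :
    (gramMat v).det ≠ 0 := by
  intro hdet
  obtain ⟨c, hc0, hmv⟩ := Matrix.exists_mulVec_eq_zero_iff.mpr hdet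
  have key : ∑ t, (∑ l, c l * v l t) ^ 2 = 0 := by
    have : ∀ t, (∑ l, c l * v l t) ^ 2 = ∑ k, c k * (v k t * (∑ l, c l * v l t)) := by
      intro t
      rw [sq, Finset.sum_mul]
      apply Finset.sum_congr rfl
      intro k _
      ring
    simp_rw [this]
    rw [Finset.sum_comm]
    have : ∀ k, ∑ t, c k * (v k t * (∑ l, c l * v l t)) = c k * (gramMat v).mulVec c k := by
      intro k
      rw [gram_mulVec, Finset.mul_sum]
    simp_rw [this, hmv]
    simp
  have hall : ∀ t, ∑ l, c l * v l t = 0 := by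
    intro t
    have := (Finset.sum_eq_zero_iff_of_nonneg (fun t _ => sq_nonneg _)).mp key t (Finset.mem_univ t)
    exact pow_eq_zero_iff (by norm_num) |>.mp this
  have := Fintype.linearIndependent_iff.mp h c (by
    funext t
    simpa [Finset.sum_apply] using hall t)
  exact hc0 (funext fun i => this i)

end Gram

section Transfer
open MvPolynomial
variable {σ : Type*} {ι n : Type*} [Fintype ι] [DecidableEq ι] [Fintype n]

/-- auxiliary polynomial Gram matrix -/
def pGram (W : ι → n → MvPolynomial σ ℚ) : Matrix ι ι (MvPolynomial σ ℚ) :=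
  Matrix.of fun k l => ∑ t, W k t * W l t

lemma generic_li (W : ι → n → MvPolynomial σ ℚ) (φ : σ → ℝ)
    (hφ : Function.Injective (MvPolynomial.aeval φ : MvPolynomial σ ℚ →ₐ[ℚ] ℝ))
    (ψ : σ → ℚ)
    (hW : LinearIndependent ℚ (fun k => fun t => MvPolynomial.eval ψ (W k t))) :
    LinearIndependent ℝ (fun k => fun t => MvPolynomial.aeval φ (W k t)) := by
  apply li_of_gram_det_ne_zero
  have h1 : gramMat (fun k t => (MvPolynomial.aeval φ) (W k t)) =
      (pGram W).map ((MvPolynomial.aeval φ : MvPolynomial σ ℚ →ₐ[ℚ] ℝ) : MvPolynomial σ ℚ →+* ℝ) := by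
    ext k l
    simp [gramMat, pGram, Matrix.map_apply, map_sum]
  rw [h1, ← RingHom.mapMatrix_apply, ← RingHom.map_det]
  have h2 : (pGram W).det ≠ 0 := by
    intro h0
    have h3 : gramMat (fun k t => MvPolynomial.eval ψ (W k t)) =
        (pGram W).map (MvPolynomial.eval ψ : MvPolynomial σ ℚ →+* ℚ) := by
      ext k l
      simp [gramMat, pGram, Matrix.map_apply, map_sum]
    have := gram_det_ne_zero_of_li hW
    rw [h3, ← RingHom.mapMatrix_apply, ← RingHom.map_det] at this
    rw [h0] at this
    simp at this
  intro h0
  apply h2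
  apply hφ
  rw [map_zero]
  exact h0

end Transfer

section Witness
variable {d : ℕ}

def ebs (u : Fin (d + 1)) : Fin (d + 1) → ℚ := fun s => if s = u then 1 else 0

def bil (u v : Fin (d + 1) → ℚ) : Fin (d + 1) × Fin (d + 1) → ℚ := fun q => u q.1 * v q.2

def verQ (x : Fin d → ℚ) : Fin (d + 1) × Fin (d + 1) → ℚ := bil (Fin.cons 1 x) (Fin.cons 1 x)

def wfun : Sym2 (Fin (d + 1)) → Fin (d + 1) × Fin (d + 1) → ℚ :=
  Sym2.lift ⟨fun u v => bil (ebs u) (ebs v) + bil (ebs v) (ebs u),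
    fun u v => add_comm _ _⟩

lemma wfun_mk (u v : Fin (d + 1)) :
    wfun s(u, v) = bil (ebs u) (ebs v) + bil (ebs v) (ebs u) := by
  simp [wfun]

lemma wfun_apply (u v s t : Fin (d + 1)) :
    wfun s(u, v) (s, t) = (if s = u ∧ t = v then 1 else 0) +
      (if s = v ∧ t = u then (1:ℚ) else 0) := by
  rw [wfun_mk]
  simp only [bil, ebs, Pi.add_apply]
  split_ifs <;> simp_all

def delQ (i : Fin d) : Fin d → ℚ := fun t => if t = i then 1 else 0

@[simp] lemma zero_ne_succ_iff (i : Fin d) : (0 : Fin (d+1)) = i.succ ↔ False :=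
  ⟨fun h => Fin.succ_ne_zero i h.symm, False.elim⟩

lemma wfun_indep : LinearIndependent ℚ (wfun (d := d)) := by
  rw [Fintype.linearIndependent_iff]
  intro g hg
  have key : ∀ u v : Fin (d + 1), g s(u, v) = 0 := by
    intro u v
    have h1 : ∑ e : Sym2 (Fin (d + 1)), g e * wfun e (u, v) = 0 := by
      have := congrFun hg (u, v)
      simpa [Finset.sum_apply] using this
    rw [Finset.sum_eq_single s(u, v)] at h1
    · rw [wfun_apply] at h1
      rcases eq_or_ne u v with h | h
      · subst h
        simp only [and_self, if_pos rfl, if_true] at h1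
        linarith
      · rw [if_pos ⟨rfl, rfl⟩, if_neg (fun hh : u = v ∧ v = u => h hh.1)] at h1
        linarith
    · intro e _ hne
      induction e using Sym2.ind with
      | _ u' v' =>
        rw [wfun_apply]
        have h2 : ¬(u = u' ∧ v = v') := by
          rintro ⟨rfl, rfl⟩; exact hne rfl
        have h3 : ¬(u = v' ∧ v = u') := by
          rintro ⟨rfl, rfl⟩; exact hne (Sym2.eq_swap)
        rw [if_neg h2, if_neg h3, add_zero, mul_zero]
    · intro h; exact absurd (Finset.mem_univ _) h
  intro e
  induction e using Sym2.ind with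
  | _ u v => exact key u v
end Witness

section Span
variable {d : ℕ}
open Submodule

lemma verQ_I1 : wfun (d := d) s(0, 0) = (2:ℚ) • verQ 0 := by
  funext q
  obtain ⟨s, t⟩ := q
  rw [wfun_apply]
  simp only [Pi.smul_apply, smul_eq_mul, verQ, bil]
  refine Fin.cases ?_ (fun s' => ?_) s <;> refine Fin.cases ?_ (fun t' => ?_) t <;>
    simp only [Fin.cons_zero, Fin.cons_succ, Fin.succ_ne_zero, Fin.succ_inj, delQ,
      Pi.add_apply, Pi.smul_apply, smul_eq_mul, zero_ne_succ_iff, false_and, and_false,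
      if_false, Pi.zero_apply] <;>
    (try split_ifs) <;> first | tauto | norm_num

lemma verQ_I2 (i : Fin d) : wfun s(0, i.succ) =
    (2:ℚ) • verQ (delQ i) - (3/2 : ℚ) • verQ 0 - (1/2 : ℚ) • verQ (2 • delQ i) := by
  funext q
  obtain ⟨s, t⟩ := q
  rw [wfun_apply]
  simp only [Pi.sub_apply, Pi.smul_apply, smul_eq_mul, verQ, bil]
  refine Fin.cases ?_ (fun s' => ?_) s <;> refine Fin.cases ?_ (fun t' => ?_) t <;>
    simp only [Fin.cons_zero, Fin.cons_succ, Fin.succ_ne_zero, Fin.succ_inj, delQ,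
      Pi.add_apply, Pi.smul_apply, smul_eq_mul, zero_ne_succ_iff, false_and, and_false,
      if_false, Pi.zero_apply] <;>
    (try split_ifs) <;> first | tauto | norm_num

lemma verQ_I3 (i j : Fin d) : wfun s(i.succ, j.succ) =
    verQ (delQ i + delQ j) - verQ (delQ i) - verQ (delQ j) + verQ 0 := by
  funext q
  obtain ⟨s, t⟩ := q
  rw [wfun_apply]
  simp only [Pi.sub_apply, Pi.add_apply, verQ, bil]
  refine Fin.cases ?_ (fun s' => ?_) s <;> refine Fin.cases ?_ (fun t' => ?_) t <;>
    simp only [Fin.cons_zero, Fin.cons_succ, Fin.succ_ne_zero, Fin.succ_inj, delQ,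
      Pi.add_apply, Pi.smul_apply, smul_eq_mul, zero_ne_succ_iff, false_and, and_false,
      if_false, Pi.zero_apply] <;>
    (try split_ifs) <;> first | tauto | norm_num

lemma wfun_mem_span (e : Sym2 (Fin (d + 1))) :
    wfun e ∈ span ℚ (Set.range (verQ (d := d))) := by
  have hver : ∀ x, verQ x ∈ span ℚ (Set.range (verQ (d := d))) :=
    fun x => subset_span ⟨x, rfl⟩
  induction e using Sym2.ind with
  | _ u v =>
    refine Fin.cases ?_ (fun i => ?_) u <;> refine Fin.cases ?_ (fun j => ?_) v
    · rw [verQ_I1]; exact smul_mem _ _ (hver 0)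
    · rw [verQ_I2]
      exact sub_mem (sub_mem (smul_mem _ _ (hver _)) (smul_mem _ _ (hver _)))
        (smul_mem _ _ (hver _))
    · rw [Sym2.eq_swap, verQ_I2]
      exact sub_mem (sub_mem (smul_mem _ _ (hver _)) (smul_mem _ _ (hver _)))
        (smul_mem _ _ (hver _))
    · rw [verQ_I3]
      exact add_mem (sub_mem (sub_mem (hver _) (hver _)) (hver _)) (hver _)

lemma exists_verQ_witness {ι : Type*} [Fintype ι]
    (hcard : Fintype.card ι ≤ (d + 2).choose 2) :
    ∃ x : ι → Fin d → ℚ, LinearIndependent ℚ (fun k => verQ (x k)) := by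
  classical
  set Spn := span ℚ (Set.range (verQ (d := d))) with hSpn
  let w' : Sym2 (Fin (d + 1)) → Spn := fun e => ⟨wfun e, wfun_mem_span e⟩
  have hli' : LinearIndependent ℚ w' := by
    apply LinearIndependent.of_comp Spn.subtype
    have : Spn.subtype ∘ w' = wfun := rfl
    rw [this]
    exact wfun_indep
  have hcard2 : (d + 2).choose 2 ≤ Module.finrank ℚ Spn := by
    have := hli'.fintype_card_le_finrank
    rwa [Sym2.card, Fintype.card_fin] at this
  obtain ⟨s, hs_sub, hs_span, hs_li⟩ := exists_linearIndependent ℚ (Set.range (verQ (d := d)))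
  have hsfin : s.Finite := hs_li.setFinite
  haveI := hsfin.fintype
  have hcard3 : Fintype.card ι ≤ Fintype.card s := by
    have h1 : Module.finrank ℚ (span ℚ s) = s.toFinset.card := finrank_span_set_eq_card hs_li
    have h2 : Fintype.card s = s.toFinset.card := Set.toFinset_card s ▸ rfl
    rw [h2, ← h1, hs_span]
    exact le_trans hcard hcard2
  obtain ⟨emb⟩ := Function.Embedding.nonempty_of_card_le hcard3
  choose x hx using fun k => hs_sub (emb k).2
  refine ⟨x, ?_⟩
  have hli2 : LinearIndependent ℚ (fun k : ι => ((emb k : s) : Fin (d+1) × Fin (d+1) → ℚ)) :=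
    hs_li.comp emb emb.injective
  have heq : (fun k => verQ (x k)) =
      fun k : ι => ((emb k : s) : Fin (d+1) × Fin (d+1) → ℚ) := funext fun k => hx k
  rw [heq]
  exact hli2

end Span

section PtA
variable {d : ℕ}

def ptA (s : Fin (d + 1)) : Fin d → ℚ := fun t => if (s : ℕ) = (t : ℕ) + 1 then 1 else 0

lemma haty_indep :
    LinearIndependent ℚ (fun s : Fin (d + 1) => (Fin.cons 1 (ptA s) : Fin (d + 1) → ℚ)) := by
  rw [Fintype.linearIndependent_iff]
  intro c hc
  have hcoord : ∀ u : Fin (d + 1), ∑ s, c s * (Fin.cons 1 (ptA s) : Fin (d + 1) → ℚ) u = 0 := by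
    intro u
    have := congrFun hc u
    simpa [Finset.sum_apply] using this
  have hne : ∀ s : Fin (d + 1), s ≠ 0 → c s = 0 := by
    intro s hs
    have hlt : (s : ℕ) - 1 < d := by
      have := s.isLt
      have : (s : ℕ) ≠ 0 := fun h => hs (Fin.ext h)
      omega
    set t : Fin d := ⟨(s : ℕ) - 1, hlt⟩ with ht
    have h1 := hcoord t.succ
    rw [Finset.sum_eq_single s] at h1
    · rw [Fin.cons_succ] at h1
      have hst : (s : ℕ) = (t : ℕ) + 1 := by
        simp only [ht]
        have : (s : ℕ) ≠ 0 := fun h => hs (Fin.ext h)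
        omega
      have hval : ptA s t = 1 := if_pos hst
      rw [hval, mul_one] at h1
      exact h1
    · intro s' _ hs'
      rw [Fin.cons_succ]
      have : ¬((s' : ℕ) = (t : ℕ) + 1) := by
        intro h
        apply hs'
        apply Fin.ext
        have hst : (s : ℕ) = (t : ℕ) + 1 := by
          simp only [ht]
          have : (s : ℕ) ≠ 0 := fun h => hs (Fin.ext h)
          omega
        omega
      simp [ptA, this]
    · intro h; exact absurd (Finset.mem_univ _) h
  intro i
  rcases eq_or_ne i 0 with h | h
  · subst h
    have h1 := hcoord 0
    rw [Finset.sum_eq_single 0] at h1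
    · simpa using h1
    · intro s' _ hs'
      simp [hne s' hs']
    · intro h; exact absurd (Finset.mem_univ _) h
  · exact hne i h

end PtA

section MainAux
variable {d a b : ℕ}

def hatR {d : ℕ} (x : EuclideanSpace ℝ (Fin d)) : Fin (d + 1) → ℝ :=
  Fin.cons 1 (fun i => x i)

lemma euclid_sum_apply {ι : Type*} [Fintype ι] (f : ι → EuclideanSpace ℝ (Fin d)) (t : Fin d) :
    (∑ x, f x) t = ∑ x, f x t := by rw [WithLp.ofLp_sum, Finset.sum_apply]

variable (p : Fin a ⊕ Fin b → EuclideanSpace ℝ (Fin d))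

def hatA (i : Fin a) : Fin (d + 1) → ℝ := hatR (p (Sum.inl i))
def hatB (j : Fin b) : Fin (d + 1) → ℝ := hatR (p (Sum.inr j))

/-- matrices satisfying the raw stress conditions -/
def S1 : Submodule ℝ (Matrix (Fin a) (Fin b) ℝ) where
  carrier := {M | (∀ i (t : Fin d), ∑ j, M i j * (p (Sum.inl i) t - p (Sum.inr j) t) = 0) ∧
    (∀ j (t : Fin d), ∑ i, M i j * (p (Sum.inr j) t - p (Sum.inl i) t) = 0)}
  zero_mem' := by constructor <;> intros <;> simp
  add_mem' := by
    rintro M N ⟨hM1, hM2⟩ ⟨hN1, hN2⟩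
    constructor <;> intro v t <;>
      simp only [Matrix.add_apply, add_mul, Finset.sum_add_distrib]
    · rw [hM1 v t, hN1 v t, add_zero]
    · rw [hM2 v t, hN2 v t, add_zero]
  smul_mem' := by
    rintro r M ⟨hM1, hM2⟩
    constructor <;> intro v t <;>
      simp only [Matrix.smul_apply, smul_eq_mul, mul_assoc, ← Finset.mul_sum]
    · rw [hM1 v t, mul_zero]
    · rw [hM2 v t, mul_zero]

/-- matrices with rows/columns annihilating the lifted configuration -/
def M0 : Submodule ℝ (Matrix (Fin a) (Fin b) ℝ) where
  carrier := {M | (∀ i (t : Fin (d + 1)), ∑ j, M i j * hatB p j t = 0) ∧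
    (∀ j (t : Fin (d + 1)), ∑ i, M i j * hatA p i t = 0)}
  zero_mem' := by constructor <;> intros <;> simp
  add_mem' := by
    rintro M N ⟨hM1, hM2⟩ ⟨hN1, hN2⟩
    constructor <;> intro v t <;>
      simp only [Matrix.add_apply, add_mul, Finset.sum_add_distrib]
    · rw [hM1 v t, hN1 v t, add_zero]
    · rw [hM2 v t, hN2 v t, add_zero]
  smul_mem' := by
    rintro r M ⟨hM1, hM2⟩
    constructor <;> intro v t <;>
      simp only [Matrix.smul_apply, smul_eq_mul, mul_assoc, ← Finset.mul_sum]
    · rw [hM1 v t, mul_zero]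
    · rw [hM2 v t, mul_zero]


lemma S1_mem (M : Matrix (Fin a) (Fin b) ℝ) :
    M ∈ S1 p ↔ ((∀ i (t : Fin d), ∑ j, M i j * (p (Sum.inl i) t - p (Sum.inr j) t) = 0) ∧
    (∀ j (t : Fin d), ∑ i, M i j * (p (Sum.inr j) t - p (Sum.inl i) t) = 0)) := Iff.rfl

lemma M0_mem (M : Matrix (Fin a) (Fin b) ℝ) :
    M ∈ M0 p ↔ ((∀ i (t : Fin (d + 1)), ∑ j, M i j * hatB p j t = 0) ∧
    (∀ j (t : Fin (d + 1)), ∑ i, M i j * hatA p i t = 0)) := Iff.rfl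

end MainAux

section Glue
variable {d a b : ℕ}

abbrev KBG (a b : ℕ) := completeBipartiteGraph (Fin a) (Fin b)

lemma nbhd_inl (i : Fin a) : (KBG a b).neighborFinset (Sum.inl i) =
    Finset.univ.map ⟨Sum.inr, Sum.inr_injective⟩ := by
  ext u
  cases u <;> simp [SimpleGraph.mem_neighborFinset]

lemma nbhd_inr (j : Fin b) : (KBG a b).neighborFinset (Sum.inr j) =
    Finset.univ.map ⟨Sum.inl, Sum.inl_injective⟩ := by
  ext u
  cases u <;> simp [SimpleGraph.mem_neighborFinset]

def symFun (M : Matrix (Fin a) (Fin b) ℝ) : Sym2 (Fin a ⊕ Fin b) → ℝ :=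
  Sym2.lift ⟨fun u v => match u, v with
    | Sum.inl i, Sum.inr j => M i j
    | Sum.inr j, Sum.inl i => M i j
    | _, _ => 0,
    fun u v => by cases u <;> cases v <;> rfl⟩

@[simp] lemma symFun_ll (M : Matrix (Fin a) (Fin b) ℝ) (i i' : Fin a) :
    symFun M s(Sum.inl i, Sum.inl i') = 0 := rfl
@[simp] lemma symFun_rr (M : Matrix (Fin a) (Fin b) ℝ) (j j' : Fin b) :
    symFun M s(Sum.inr j, Sum.inr j') = 0 := rfl
@[simp] lemma symFun_lr (M : Matrix (Fin a) (Fin b) ℝ) (i : Fin a) (j : Fin b) :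
    symFun M s(Sum.inl i, Sum.inr j) = M i j := rfl
@[simp] lemma symFun_rl (M : Matrix (Fin a) (Fin b) ℝ) (i : Fin a) (j : Fin b) :
    symFun M s(Sum.inr j, Sum.inl i) = M i j := rfl

variable (p : Fin a ⊕ Fin b → EuclideanSpace ℝ (Fin d))

lemma stress_mem1 (ω : Sym2 (Fin a ⊕ Fin b) → ℝ) (hω : ω ∈ stressSpace d (KBG a b) p) :
    Matrix.of (fun i j => ω s(Sum.inl i, Sum.inr j)) ∈ S1 p := by
  obtain ⟨h1, h2⟩ := hω
  rw [S1_mem]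
  constructor
  · intro i t
    have h3 := h2 (Sum.inl i)
    rw [nbhd_inl, Finset.sum_map] at h3
    simp only [Function.Embedding.coeFn_mk] at h3
    have h4 := congrArg (fun v : EuclideanSpace ℝ (Fin d) => v t) h3
    rw [euclid_sum_apply (fun j => ω s(Sum.inr j, Sum.inl i) • (p (Sum.inl i) - p (Sum.inr j)))] at h4
    refine Eq.trans ?_ h4
    apply Finset.sum_congr rfl
    intro j _
    rw [Sym2.eq_swap]
    rfl
  · intro j t
    have h3 := h2 (Sum.inr j)
    rw [nbhd_inr, Finset.sum_map] at h3
    simp only [Function.Embedding.coeFn_mk] at h3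
    have h4 := congrArg (fun v : EuclideanSpace ℝ (Fin d) => v t) h3
    rw [euclid_sum_apply (fun i => ω s(Sum.inl i, Sum.inr j) • (p (Sum.inr j) - p (Sum.inl i)))] at h4
    exact h4

lemma stress_mem2 (M : Matrix (Fin a) (Fin b) ℝ) (hM : M ∈ S1 p) :
    symFun M ∈ stressSpace d (KBG a b) p := by
  rw [S1_mem] at hM
  obtain ⟨hM1, hM2⟩ := hM
  constructor
  · intro e he
    induction e using Sym2.ind with
    | _ u v =>
      cases u <;> cases v
      · rfl
      · exact absurd (by simp [SimpleGraph.mem_edgeSet]) he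
      · exact absurd (by simp [SimpleGraph.mem_edgeSet]) he
      · rfl
  · intro v
    cases v with
    | inl i =>
      rw [nbhd_inl, Finset.sum_map]
      simp only [Function.Embedding.coeFn_mk]
      ext t
      rw [euclid_sum_apply (fun j => symFun M s(Sum.inr j, Sum.inl i) • (p (Sum.inl i) - p (Sum.inr j)))]
      have : ∀ j, (symFun M s(Sum.inr j, Sum.inl i) • (p (Sum.inl i) - p (Sum.inr j))) t =
          M i j * (p (Sum.inl i) t - p (Sum.inr j) t) := by
        intro j; rfl
      simp only [this]
      exact hM1 i t
    | inr j =>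
      rw [nbhd_inr, Finset.sum_map]
      simp only [Function.Embedding.coeFn_mk]
      ext t
      rw [euclid_sum_apply (fun i => symFun M s(Sum.inl i, Sum.inr j) • (p (Sum.inr j) - p (Sum.inl i)))]
      exact hM2 j t

lemma stress_inv1 (ω : Sym2 (Fin a ⊕ Fin b) → ℝ) (hω : ω ∈ stressSpace d (KBG a b) p) :
    symFun (Matrix.of (fun i j => ω s(Sum.inl i, Sum.inr j))) = ω := by
  obtain ⟨h1, h2⟩ := hω
  funext e
  induction e using Sym2.ind with
  | _ u v =>
    cases u <;> cases v
    · exact (h1 _ (by simp)).symm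
    · rfl
    · rw [symFun_rl, Sym2.eq_swap]
      rfl
    · exact (h1 _ (by simp)).symm

def eqv1 : (stressSpace d (KBG a b) p) ≃ₗ[ℝ] S1 p where
  toFun ω := ⟨Matrix.of (fun i j => ω.1 s(Sum.inl i, Sum.inr j)), stress_mem1 p ω.1 ω.2⟩
  map_add' _ _ := Subtype.ext rfl
  map_smul' _ _ := Subtype.ext rfl
  invFun M := ⟨symFun M.1, stress_mem2 p M.1 M.2⟩
  left_inv ω := Subtype.ext (stress_inv1 p ω.1 ω.2)
  right_inv M := Subtype.ext rfl

section GenericFacts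
variable {d a b : ℕ}

def hatP {d a b : ℕ} (k : Fin a ⊕ Fin b) : Fin (d + 1) → MvPolynomial ((Fin a ⊕ Fin b) × Fin d) ℚ :=
  Fin.cons 1 (fun i => MvPolynomial.X (k, i))

variable (p : Fin a ⊕ Fin b → EuclideanSpace ℝ (Fin d))

lemma aeval_hatP (k : Fin a ⊕ Fin b) (u : Fin (d + 1)) :
    MvPolynomial.aeval (fun x : (Fin a ⊕ Fin b) × Fin d => p x.1 x.2) (hatP k u) =
      hatR (p k) u := by
  refine Fin.cases ?_ (fun i => ?_) u <;> simp [hatP, hatR]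

lemma eval_hatP (x : (Fin a ⊕ Fin b) → Fin d → ℚ) (k : Fin a ⊕ Fin b) (u : Fin (d + 1)) :
    MvPolynomial.eval (fun s : (Fin a ⊕ Fin b) × Fin d => x s.1 s.2) (hatP k u) =
      (Fin.cons 1 (x k) : Fin (d + 1) → ℚ) u := by
  refine Fin.cases ?_ (fun i => ?_) u <;> simp [hatP]

/-- generic Veronese independence -/
lemma verR_indep (hab : a + b ≤ (d + 2).choose 2) (hp : Generic p) :
    LinearIndependent ℝ (fun k : Fin a ⊕ Fin b =>
      fun q : Fin (d + 1) × Fin (d + 1) => hatR (p k) q.1 * hatR (p k) q.2) := by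
  obtain ⟨x, hx⟩ := exists_verQ_witness (ι := Fin a ⊕ Fin b)
    (by rwa [Fintype.card_sum, Fintype.card_fin, Fintype.card_fin])
  have h := generic_li (fun k (q : Fin (d + 1) × Fin (d + 1)) => hatP k q.1 * hatP k q.2)
    (fun s => p s.1 s.2) hp (fun s => x s.1 s.2) ?_
  · have heq : (fun k (q : Fin (d + 1) × Fin (d + 1)) =>
        MvPolynomial.aeval (fun s : (Fin a ⊕ Fin b) × Fin d => p s.1 s.2)
          (hatP k q.1 * hatP k q.2)) =
        fun k q => hatR (p k) q.1 * hatR (p k) q.2 := by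
      funext k q
      rw [map_mul, aeval_hatP, aeval_hatP]
    rwa [heq] at h
  · have heq : (fun k (q : Fin (d + 1) × Fin (d + 1)) =>
        MvPolynomial.eval (fun s : (Fin a ⊕ Fin b) × Fin d => x s.1 s.2)
          (hatP k q.1 * hatP k q.2)) = fun k => verQ (x k) := by
      funext k q
      rw [map_mul, eval_hatP, eval_hatP]
      rfl
    rwa [heq]

/-- generic spanning of the lifted left points -/
lemma hatA_indep (ha : d + 1 ≤ a) (hp : Generic p) :
    LinearIndependent ℝ (fun s : Fin (d + 1) => hatR (p (Sum.inl (Fin.castLE ha s)))) := by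
  have h := generic_li (fun (s : Fin (d + 1)) (t : Fin (d + 1)) =>
      hatP (Sum.inl (Fin.castLE ha s)) t)
    (fun s => p s.1 s.2) hp
    (fun s => Sum.elim (fun (i : Fin a) (u : Fin d) => if (i : ℕ) = (u : ℕ) + 1 then (1:ℚ) else 0)
      (fun _ _ => 0) s.1 s.2) ?_
  · have heq : (fun (s : Fin (d + 1)) (t : Fin (d + 1)) =>
        MvPolynomial.aeval (fun s : (Fin a ⊕ Fin b) × Fin d => p s.1 s.2)
          (hatP (Sum.inl (Fin.castLE ha s)) t)) =
        fun s => hatR (p (Sum.inl (Fin.castLE ha s))) := by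
      funext s t
      rw [aeval_hatP]
    rwa [heq] at h
  · have heq : (fun (s : Fin (d + 1)) (t : Fin (d + 1)) =>
        MvPolynomial.eval (fun s : (Fin a ⊕ Fin b) × Fin d =>
          Sum.elim (fun (i : Fin a) (u : Fin d) => if (i : ℕ) = (u : ℕ) + 1 then (1:ℚ) else 0)
            (fun _ _ => 0) s.1 s.2)
          (hatP (Sum.inl (Fin.castLE ha s)) t)) =
        fun s : Fin (d + 1) => (Fin.cons 1 (ptA s) : Fin (d + 1) → ℚ) := by
      funext s t
      have := eval_hatP (a := a) (b := b)
        (Sum.elim (fun (i : Fin a) (u : Fin d) => if (i : ℕ) = (u : ℕ) + 1 then (1:ℚ) else 0)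
          (fun _ _ => 0)) (Sum.inl (Fin.castLE ha s)) t
      have harg : (Sum.elim (fun (i : Fin a) (u : Fin d) =>
          if (i : ℕ) = (u : ℕ) + 1 then (1:ℚ) else 0) (fun (_ : Fin b) (_ : Fin d) => (0:ℚ))
          (Sum.inl (Fin.castLE ha s)) : Fin d → ℚ) = ptA s := by
        funext u
        simp [ptA]
      rw [this, harg]
    rw [heq]
    exact haty_indep
end GenericFacts

section Core
variable {d a b : ℕ} (p : Fin a ⊕ Fin b → EuclideanSpace ℝ (Fin d))

@[simp] lemma hatR_zero (x : EuclideanSpace ℝ (Fin d)) : hatR x 0 = 1 := rfl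
@[simp] lemma hatR_succ (x : EuclideanSpace ℝ (Fin d)) (t : Fin d) :
    hatR x t.succ = x t := by simp [hatR]

lemma S1_eq_M0 (hab : a + b ≤ (d + 2).choose 2) (hp : Generic p) : S1 p = M0 p := by
  apply le_antisymm
  · intro M hM
    obtain ⟨hM1, hM2⟩ := (S1_mem p M).mp hM
    set r : Fin a → ℝ := fun i => ∑ j, M i j with hr
    set c : Fin b → ℝ := fun j => ∑ i, M i j with hc
    have rowHat : ∀ i (t : Fin (d + 1)), ∑ j, M i j * hatB p j t = r i * hatA p i t := by
      intro i t
      refine Fin.cases ?_ (fun t' => ?_) t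
      · simp [hatB, hatA, hr]
      · have h1 := hM1 i t'
        simp only [mul_sub] at h1
        rw [Finset.sum_sub_distrib, sub_eq_zero] at h1
        simp only [hatB, hatA, hatR_succ]
        rw [← h1, hr]
        rw [Finset.sum_mul]
    have colHat : ∀ j (t : Fin (d + 1)), ∑ i, M i j * hatA p i t = c j * hatB p j t := by
      intro j t
      refine Fin.cases ?_ (fun t' => ?_) t
      · simp [hatB, hatA, hc]
      · have h1 := hM2 j t'
        simp only [mul_sub] at h1
        rw [Finset.sum_sub_distrib, sub_eq_zero] at h1
        simp only [hatB, hatA, hatR_succ]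
        rw [← h1, hc]
        rw [Finset.sum_mul]
    have hg : ∀ k : Fin a ⊕ Fin b, Sum.elim r (fun j => -c j) k = 0 := by
      apply Fintype.linearIndependent_iff.mp (verR_indep p hab hp)
      funext q
      rw [Finset.sum_apply]
      rw [Fintype.sum_sum_type]
      simp only [Sum.elim_inl, Sum.elim_inr, Pi.smul_apply, smul_eq_mul]
      have key1 : ∀ i, r i * (hatR (p (Sum.inl i)) q.1 * hatR (p (Sum.inl i)) q.2) =
          ∑ j, M i j * (hatA p i q.1 * hatB p j q.2) := by
        intro i
        have := rowHat i q.2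
        calc r i * (hatR (p (Sum.inl i)) q.1 * hatR (p (Sum.inl i)) q.2)
            = hatA p i q.1 * (r i * hatA p i q.2) := by rw [hatA]; ring
          _ = hatA p i q.1 * ∑ j, M i j * hatB p j q.2 := by rw [this]
          _ = ∑ j, M i j * (hatA p i q.1 * hatB p j q.2) := by
              rw [Finset.mul_sum]
              exact Finset.sum_congr rfl fun j _ => by ring
      have key2 : ∀ j, c j * (hatR (p (Sum.inr j)) q.1 * hatR (p (Sum.inr j)) q.2) =
          ∑ i, M i j * (hatA p i q.1 * hatB p j q.2) := by
        intro j
        have := colHat j q.1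
        calc c j * (hatR (p (Sum.inr j)) q.1 * hatR (p (Sum.inr j)) q.2)
            = (c j * hatB p j q.1) * hatB p j q.2 := by rw [hatB]; ring
          _ = (∑ i, M i j * hatA p i q.1) * hatB p j q.2 := by rw [this]
          _ = ∑ i, M i j * (hatA p i q.1 * hatB p j q.2) := by
              rw [Finset.sum_mul]
              exact Finset.sum_congr rfl fun i _ => by ring
      have e1 : ∑ i, r i * (hatR (p (Sum.inl i)) q.1 * hatR (p (Sum.inl i)) q.2) =
          ∑ i, ∑ j, M i j * (hatA p i q.1 * hatB p j q.2) :=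
        Finset.sum_congr rfl fun i _ => key1 i
      have e2 : ∑ j, -c j * (hatR (p (Sum.inr j)) q.1 * hatR (p (Sum.inr j)) q.2) =
          -∑ i, ∑ j, M i j * (hatA p i q.1 * hatB p j q.2) := by
        rw [Finset.sum_comm, ← Finset.sum_neg_distrib]
        exact Finset.sum_congr rfl fun j _ => by rw [← key2 j]; ring
      rw [e1, e2]
      simp
    rw [M0_mem]
    constructor
    · intro i t
      rw [rowHat i t]
      have : r i = 0 := hg (Sum.inl i)
      rw [this, zero_mul]
    · intro j t
      rw [colHat j t]
      have : c j = 0 := by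
        have := hg (Sum.inr j)
        simp only [Sum.elim_inr, neg_eq_zero] at this
        exact this
      rw [this, zero_mul]
  · intro M hM
    obtain ⟨hM1, hM2⟩ := (M0_mem p M).mp hM
    rw [S1_mem]
    constructor
    · intro i t
      simp only [mul_sub]
      rw [Finset.sum_sub_distrib, sub_eq_zero]
      have h0 : ∑ j, M i j = 0 := by
        have := hM1 i 0
        simpa [hatB] using this
      have hs := hM1 i t.succ
      simp only [hatB, hatR_succ] at hs
      rw [hs, ← Finset.sum_mul, h0, zero_mul]
    · intro j t
      simp only [mul_sub]
      rw [Finset.sum_sub_distrib, sub_eq_zero]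
      have h0 : ∑ i, M i j = 0 := by
        have := hM2 j 0
        simpa [hatA] using this
      have hs := hM2 j t.succ
      simp only [hatA, hatR_succ] at hs
      rw [hs, ← Finset.sum_mul, h0, zero_mul]
end Core

def Amap : (Fin a → ℝ) →ₗ[ℝ] (Fin (d + 1) → ℝ) := Fintype.linearCombination ℝ (hatA p)
def Bmap : (Fin b → ℝ) →ₗ[ℝ] (Fin (d + 1) → ℝ) := Fintype.linearCombination ℝ (hatB p)

def KA : Submodule ℝ (Fin a → ℝ) := LinearMap.ker (Amap p)

lemma KA_mem (x : Fin a → ℝ) : x ∈ KA p ↔ ∀ t, ∑ i, x i * hatA p i t = 0 := by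
  rw [KA, LinearMap.mem_ker, Amap, Fintype.linearCombination_apply]
  constructor
  · intro h t
    have := congrFun h t
    simpa [Finset.sum_apply] using this
  · intro h
    funext t
    simpa [Finset.sum_apply] using h t

def Lmap : (Fin b → KA p) →ₗ[ℝ] (Fin (d + 1) → KA p) where
  toFun x := fun t => ∑ j, hatB p j t • x j
  map_add' x y := by
    funext t
    simp [smul_add, Finset.sum_add_distrib]
  map_smul' r x := by
    funext t
    show ∑ j, hatB p j t • (r • x j) = (r • fun t => ∑ j, hatB p j t • x j) t
    rw [Pi.smul_apply, Finset.smul_sum]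
    exact Finset.sum_congr rfl fun j _ => smul_comm _ _ _

def eqv2 : (M0 p) ≃ₗ[ℝ] LinearMap.ker (Lmap p) where
  toFun M := ⟨fun j => ⟨fun i => M.1 i j, by
      rw [KA_mem]
      exact fun t => ((M0_mem p M.1).mp M.2).2 j t⟩, by
    rw [LinearMap.mem_ker]
    funext t
    apply Subtype.ext
    show ((∑ j, hatB p j t • (⟨fun i => M.1 i j, _⟩ : KA p)) : KA p).1 = 0
    rw [AddSubmonoidClass.coe_finset_sum]
    funext i
    rw [Finset.sum_apply]
    simp only [SetLike.val_smul, Pi.smul_apply, smul_eq_mul, ZeroMemClass.coe_zero,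
      Pi.zero_apply]
    have := ((M0_mem p M.1).mp M.2).1 i t
    rw [← this]
    exact Finset.sum_congr rfl fun j _ => mul_comm _ _⟩
  map_add' M N := by apply Subtype.ext; funext j; apply Subtype.ext; rfl
  map_smul' r M := by apply Subtype.ext; funext j; apply Subtype.ext; rfl
  invFun x := ⟨Matrix.of fun i j => (x.1 j).1 i, by
    rw [M0_mem]
    constructor
    · intro i t
      have h1 : (∑ j, hatB p j t • x.1 j : KA p) = (0 : KA p) :=
        congrFun (LinearMap.mem_ker.mp x.2) t
      have h2 := congrFun (congrArg Subtype.val h1) i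
      rw [AddSubmonoidClass.coe_finset_sum, Finset.sum_apply] at h2
      simp only [SetLike.val_smul, Pi.smul_apply, smul_eq_mul, ZeroMemClass.coe_zero,
        Pi.zero_apply] at h2
      rw [← h2]
      exact Finset.sum_congr rfl fun j _ => mul_comm _ _
    · intro j t
      have h1 := (KA_mem p (x.1 j).1).mp (x.1 j).2 t
      exact h1⟩
  left_inv M := by apply Subtype.ext; funext i j; rfl
  right_inv x := by apply Subtype.ext; funext j; apply Subtype.ext; rfl

lemma Lmap_surj (hB : LinearMap.range (Bmap p) = ⊤) :
    LinearMap.range (Lmap p) = ⊤ := by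
  rw [LinearMap.range_eq_top]
  intro y
  have hs : Function.Surjective (Bmap p) := LinearMap.range_eq_top.mp hB
  choose u hu using fun t : Fin (d + 1) => hs (Pi.single t 1)
  refine ⟨fun j => ∑ t, u t j • y t, ?_⟩
  funext t'
  apply Subtype.ext
  show ((∑ j, hatB p j t' • ∑ t, u t j • y t) : KA p).1 = (y t').1
  rw [AddSubmonoidClass.coe_finset_sum]
  funext i
  rw [Finset.sum_apply]
  have step : ∀ j, ((hatB p j t' • ∑ t, u t j • y t : KA p)).1 i =
      ∑ t, hatB p j t' * (u t j * (y t).1 i) := by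
    intro j
    simp only [SetLike.val_smul, Pi.smul_apply, smul_eq_mul]
    rw [AddSubmonoidClass.coe_finset_sum, Finset.sum_apply, Finset.mul_sum]
    apply Finset.sum_congr rfl
    intro t _
    simp only [SetLike.val_smul, Pi.smul_apply, smul_eq_mul]
  simp only [step]
  rw [Finset.sum_comm]
  have inner : ∀ t, ∑ j, hatB p j t' * (u t j * (y t).1 i) =
      (if t' = t then 1 else 0) * (y t).1 i := by
    intro t
    have hBu : ∑ j, u t j * hatB p j t' = (Pi.single t 1 : Fin (d+1) → ℝ) t' := by
      have := congrFun (hu t) t'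
      rw [Bmap, Fintype.linearCombination_apply] at this
      rw [← this, Finset.sum_apply]
      apply Finset.sum_congr rfl
      intro j _
      simp [mul_comm]
    calc ∑ j, hatB p j t' * (u t j * (y t).1 i)
        = (∑ j, u t j * hatB p j t') * (y t).1 i := by
          rw [Finset.sum_mul]
          exact Finset.sum_congr rfl fun j _ => by ring
      _ = (Pi.single t 1 : Fin (d+1) → ℝ) t' * (y t).1 i := by rw [hBu]
      _ = (if t' = t then 1 else 0) * (y t).1 i := by rw [Pi.single_apply]
  simp only [inner]
  rw [Finset.sum_eq_single t']
  · simp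
  · intro t _ ht
    simp [Ne.symm ht]
  · intro h; exact absurd (Finset.mem_univ _) h

lemma finrank_M0 (ha : d + 1 ≤ a) (hb : d + 1 ≤ b)
    (hA : LinearMap.range (Amap p) = ⊤) (hB : LinearMap.range (Bmap p) = ⊤) :
    Module.finrank ℝ (M0 p) = (a - d - 1) * (b - d - 1) := by
  have hKA0 : Module.finrank ℝ (LinearMap.ker (Amap p)) = a - (d + 1) := by
    have h1 := LinearMap.finrank_range_add_finrank_ker (Amap p)
    rw [hA, finrank_top, Module.finrank_fintype_fun_eq_card, Module.finrank_fintype_fun_eq_card,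
      Fintype.card_fin, Fintype.card_fin] at h1
    omega
  have hKA : Module.finrank ℝ (KA p) = a - (d + 1) := hKA0
  have hdom : Module.finrank ℝ (Fin b → KA p) = b * (a - (d + 1)) := by
    rw [Module.finrank_pi_fintype, Finset.sum_const, Finset.card_univ, Fintype.card_fin, hKA]
    simp [Nat.smul_one_eq_cast]
  have hcod : Module.finrank ℝ (Fin (d + 1) → KA p) = (d + 1) * (a - (d + 1)) := by
    rw [Module.finrank_pi_fintype, Finset.sum_const, Finset.card_univ, Fintype.card_fin, hKA]
    simp [Nat.smul_one_eq_cast]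
  have h2 := LinearMap.finrank_range_add_finrank_ker (Lmap p)
  rw [Lmap_surj p hB, finrank_top, hcod, hdom] at h2
  have h3 : Module.finrank ℝ (M0 p) = Module.finrank ℝ (LinearMap.ker (Lmap p)) :=
    (eqv2 p).finrank_eq
  have h4 : b * (a - (d + 1)) = (b - (d + 1)) * (a - (d + 1)) + (d + 1) * (a - (d + 1)) := by
    rw [← Nat.add_mul]
    congr 1
    omega
  rw [h4, Nat.add_comm ((d + 1) * (a - (d + 1)))
    (Module.finrank ℝ (LinearMap.ker (Lmap p)))] at h2
  have h5 : Module.finrank ℝ (LinearMap.ker (Lmap p)) = (b - (d + 1)) * (a - (d + 1)) :=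
    Nat.add_right_cancel h2
  rw [h3, h5, Nat.mul_comm]
  congr 1 <;> omega


end Glue

section SpanFacts
variable {d a b : ℕ} (p : Fin a ⊕ Fin b → EuclideanSpace ℝ (Fin d))

lemma hatB_indep (hb : d + 1 ≤ b) (hp : Generic p) :
    LinearIndependent ℝ (fun s : Fin (d + 1) => hatR (p (Sum.inr (Fin.castLE hb s)))) := by
  have h := generic_li (fun (s : Fin (d + 1)) (t : Fin (d + 1)) =>
      hatP (Sum.inr (Fin.castLE hb s)) t)
    (fun s => p s.1 s.2) hp
    (fun s => Sum.elim (fun (_ : Fin a) (_ : Fin d) => (0:ℚ))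
      (fun (j : Fin b) (u : Fin d) => if (j : ℕ) = (u : ℕ) + 1 then (1:ℚ) else 0) s.1 s.2) ?_
  · have heq : (fun (s : Fin (d + 1)) (t : Fin (d + 1)) =>
        MvPolynomial.aeval (fun s : (Fin a ⊕ Fin b) × Fin d => p s.1 s.2)
          (hatP (Sum.inr (Fin.castLE hb s)) t)) =
        fun s => hatR (p (Sum.inr (Fin.castLE hb s))) := by
      funext s t
      rw [aeval_hatP]
    rwa [heq] at h
  · have heq : (fun (s : Fin (d + 1)) (t : Fin (d + 1)) =>
        MvPolynomial.eval (fun s : (Fin a ⊕ Fin b) × Fin d =>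
          Sum.elim (fun (_ : Fin a) (_ : Fin d) => (0:ℚ))
            (fun (j : Fin b) (u : Fin d) => if (j : ℕ) = (u : ℕ) + 1 then (1:ℚ) else 0)
            s.1 s.2)
          (hatP (Sum.inr (Fin.castLE hb s)) t)) =
        fun s : Fin (d + 1) => (Fin.cons 1 (ptA s) : Fin (d + 1) → ℚ) := by
      funext s t
      have := eval_hatP (a := a) (b := b)
        (Sum.elim (fun (_ : Fin a) (_ : Fin d) => (0:ℚ))
          (fun (j : Fin b) (u : Fin d) => if (j : ℕ) = (u : ℕ) + 1 then (1:ℚ) else 0))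
        (Sum.inr (Fin.castLE hb s)) t
      have harg : (Sum.elim (fun (_ : Fin a) (_ : Fin d) => (0:ℚ))
          (fun (j : Fin b) (u : Fin d) => if (j : ℕ) = (u : ℕ) + 1 then (1:ℚ) else 0)
          (Sum.inr (Fin.castLE hb s)) : Fin d → ℚ) = ptA s := by
        funext u
        simp [ptA]
      rw [this, harg]
    rw [heq]
    exact haty_indep

lemma Amap_range (ha : d + 1 ≤ a) (hp : Generic p) : LinearMap.range (Amap p) = ⊤ := by
  rw [Amap, Fintype.range_linearCombination, eq_top_iff]
  have hAi : LinearIndependent ℝ (fun s : Fin (d + 1) => hatA p (Fin.castLE ha s)) :=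
    hatA_indep p ha hp
  have hspan := hAi.span_eq_top_of_card_eq_finrank
    (by rw [Fintype.card_fin, Module.finrank_fintype_fun_eq_card, Fintype.card_fin])
  rw [← hspan]
  apply Submodule.span_mono
  rintro _ ⟨s, rfl⟩
  exact ⟨Fin.castLE ha s, rfl⟩

lemma Bmap_range (hb : d + 1 ≤ b) (hp : Generic p) : LinearMap.range (Bmap p) = ⊤ := by
  rw [Bmap, Fintype.range_linearCombination, eq_top_iff]
  have hBi : LinearIndependent ℝ (fun s : Fin (d + 1) => hatB p (Fin.castLE hb s)) :=
    hatB_indep p hb hp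
  have hspan := hBi.span_eq_top_of_card_eq_finrank
    (by rw [Fintype.card_fin, Module.finrank_fintype_fun_eq_card, Fintype.card_fin])
  rw [← hspan]
  apply Submodule.span_mono
  rintro _ ⟨s, rfl⟩
  exact ⟨Fin.castLE hb s, rfl⟩

end SpanFacts


/-- Theorem (Bolker–Roth): for `d+1 ≤ a, b` and `a + b ≤ C(d+2, 2)`, the space
of equilibrium stresses of a generic framework of `K_{a,b}` in `ℝ^d` has
dimension `(a - d - 1)(b - d - 1)`. -/
theorem bolker_roth (d a b : ℕ) (ha : d + 1 ≤ a) (hb : d + 1 ≤ b)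
    (hab : a + b ≤ (d + 2).choose 2)
    (p : Fin a ⊕ Fin b → EuclideanSpace ℝ (Fin d)) (hp : Generic p) :
    Module.finrank ℝ (stressSpace d (completeBipartiteGraph (Fin a) (Fin b)) p) =
      (a - d - 1) * (b - d - 1) := by
  have h1 : Module.finrank ℝ
      (stressSpace d (completeBipartiteGraph (Fin a) (Fin b)) p) =
      Module.finrank ℝ (S1 p) := LinearEquiv.finrank_eq (eqv1 p)
  rw [h1, S1_eq_M0 p hab hp]
  exact finrank_M0 p ha hb (Amap_range p ha hp) (Bmap_range p hb hp)

end
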